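/- For a unit vector x in H (‖x‖ = 1), the following three conditions are equivalent: (a) the one-dimensional subspace ℂ ∙ x spanned by x is copyable along δ_e; (b) there exists a scalar z : ℂ with |z| = 1 such that δ_e x = z • (x ⊗ₜ x); (c) there exists a unit vector x' in H with ℂ ∙ x' = ℂ ∙ x and δ_e x' = x' ⊗ₜ x'. -/

import Mathlib

open scoped TensorProduct InnerProductSpace

/-- The orthogonal projection of `H` onto the subspace `K`, regarded as an endomorphism
`P_K : H →ₗ[ℂ] H`. -/
noncomputable def projL {H : Type*} [NormedAddCommGroup H] [InnerProductSpace ℂ H]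
    [FiniteDimensional ℂ H] (K : Submodule ℂ H) : H →ₗ[ℂ] H :=
  K.subtype ∘ₗ K.orthogonalProjectionOnto.toLinearMap

/-- The classical structure `δ_e : H →ₗ[ℂ] H ⊗[ℂ] H` associated with an orthonormal basis
`e`, determined by `δ_e x = ∑ i, ⟪e i, x⟫_ℂ • (e i ⊗ₜ e i)`. -/
noncomputable def delta {ι H : Type*} [Fintype ι] [NormedAddCommGroup H]
    [InnerProductSpace ℂ H] (e : ι → H) : H →ₗ[ℂ] H ⊗[ℂ] H :=
  ∑ i, (innerSL ℂ (e i)).toLinearMap.smulRight (e i ⊗ₜ[ℂ] e i)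

/-- A subspace `K` of `H` is copyable along `δ_e` if `δ_e ∘ₗ P_K = (P_K ⊗ P_K) ∘ₗ δ_e`. -/
def Copyable {ι H : Type*} [Fintype ι] [NormedAddCommGroup H] [InnerProductSpace ℂ H]
    [FiniteDimensional ℂ H] (e : ι → H) (K : Submodule ℂ H) : Prop :=
  delta e ∘ₗ projL K = TensorProduct.map (projL K) (projL K) ∘ₗ delta e

section Aux

variable {ι H : Type*} [Fintype ι] [NormedAddCommGroup H] [InnerProductSpace ℂ H]

lemma delta_apply (e : ι → H) (y : H) :
    delta e y = ∑ i, ⟪e i, y⟫_ℂ • (e i ⊗ₜ[ℂ] e i) := by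
  simp [delta]

lemma delta_onb [DecidableEq ι] (e : OrthonormalBasis ι ℂ H) (j : ι) :
    delta (⇑e) (e j) = e j ⊗ₜ[ℂ] e j := by
  rw [delta_apply]
  have h := orthonormal_iff_ite.mp e.orthonormal
  simp [h]

lemma projL_span_singleton [FiniteDimensional ℂ H] {x : H} (hx : ‖x‖ = 1) (y : H) :
    projL (ℂ ∙ x) y = ⟪x, y⟫_ℂ • x := by
  exact Submodule.starProjection_unit_singleton ℂ hx y

noncomputable def phi (e : ι → H) (i j : ι) : (H ⊗[ℂ] H) →ₗ[ℂ] ℂ :=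
  LinearMap.mul' ℂ ℂ ∘ₗ
    TensorProduct.map ((innerSL ℂ (e i)).toLinearMap) ((innerSL ℂ (e j)).toLinearMap)

set_option linter.unusedSectionVars false in
lemma phi_tmul (e : ι → H) (i j : ι) (a b : H) :
    phi e i j (a ⊗ₜ[ℂ] b) = ⟪e i, a⟫_ℂ * ⟪e j, b⟫_ℂ := by
  simp [phi]

lemma key [DecidableEq ι] (e : OrthonormalBasis ι ℂ H) (x : H) (hx : ‖x‖ = 1) (z : ℂ)
    (h : delta (⇑e) x = z • (x ⊗ₜ[ℂ] x)) :
    ∃ (i : ι) (c : ℂ), ‖c‖ = 1 ∧ x = c • e i := by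
  set c : ι → ℂ := fun i => ⟪e i, x⟫_ℂ with hc
  have hrep : ∑ i, c i • e i = x := e.sum_repr' x
  have hite := orthonormal_iff_ite.mp e.orthonormal
  have hco : ∀ i j, (if i = j then c j else 0) = z * (c i * c j) := by
    intro i j
    have h2 := congrArg (phi (⇑e) i j) h
    rw [delta_apply, map_sum, map_smul, phi_tmul] at h2
    simp only [map_smul, phi_tmul, hite, smul_eq_mul, mul_ite, mul_one, mul_zero,
      Finset.sum_ite_eq] at h2
    simpa using h2
  have hz : z ≠ 0 := by
    intro hz0
    have hall : ∀ i, c i = 0 := fun i => by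
      have := hco i i; simpa [hz0] using this
    have : x = 0 := by rw [← hrep]; simp [hall]
    rw [this] at hx; simp at hx
  obtain ⟨i₀, hi₀⟩ : ∃ i, c i ≠ 0 := by
    by_contra hall
    push_neg at hall
    have : x = 0 := by rw [← hrep]; simp [hall]
    rw [this] at hx; simp at hx
  have hj : ∀ j, j ≠ i₀ → c j = 0 := by
    intro j hji
    have := hco i₀ j
    rw [if_neg (Ne.symm hji)] at this
    rcases mul_eq_zero.mp this.symm with h' | h'
    · exact absurd h' hz
    · rcases mul_eq_zero.mp h' with h'' | h''
      · exact absurd h'' hi₀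
      · exact h''
  have hxe : x = c i₀ • e i₀ := by
    rw [← hrep]
    rw [Finset.sum_eq_single i₀ (fun b _ hb => by rw [hj b hb, zero_smul]) (by simp)]
  refine ⟨i₀, c i₀, ?_, hxe⟩
  have : ‖x‖ = ‖c i₀‖ * ‖e i₀‖ := by rw [hxe, norm_smul]
  rw [hx, e.orthonormal.1 i₀, mul_one] at this
  exact this.symm

lemma copyable_basis [DecidableEq ι] [FiniteDimensional ℂ H]
    (e : OrthonormalBasis ι ℂ H) (i : ι) :
    Copyable (⇑e) (ℂ ∙ (e i)) := by
  have hite := orthonormal_iff_ite.mp e.orthonormal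
  have hnorm : ‖e i‖ = 1 := e.orthonormal.1 i
  apply LinearMap.ext
  intro y
  simp only [LinearMap.comp_apply]
  rw [projL_span_singleton hnorm, map_smul, delta_onb]
  rw [delta_apply, map_sum, Finset.sum_eq_single i
    (fun k _ hk => by
      rw [map_smul, TensorProduct.map_tmul, projL_span_singleton hnorm (e k), hite,
        if_neg (Ne.symm hk), zero_smul, TensorProduct.zero_tmul, smul_zero])
    (by simp)]
  rw [map_smul, TensorProduct.map_tmul, projL_span_singleton hnorm (e i), hite,
    if_pos rfl, one_smul]

end Aux

/-- For a unit vector `x` in `H`, the following are equivalent: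
(a) the one-dimensional subspace `ℂ ∙ x` is copyable along `δ_e`;
(b) there is a phase `z : ℂ` with `|z| = 1` such that `δ_e x = z • (x ⊗ₜ x)`;
(c) there is a unit vector `x'` with `ℂ ∙ x' = ℂ ∙ x` and `δ_e x' = x' ⊗ₜ x'`. -/
theorem copyable_unitVector_tfae
    {ι H : Type*} [Fintype ι] [NormedAddCommGroup H] [InnerProductSpace ℂ H]
    [FiniteDimensional ℂ H] (e : OrthonormalBasis ι ℂ H) (x : H) (hx : ‖x‖ = 1) :
    List.TFAE
      [ Copyable (⇑e) (ℂ ∙ x),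
        ∃ z : ℂ, ‖z‖ = 1 ∧ delta (⇑e) x = z • (x ⊗ₜ[ℂ] x),
        ∃ x' : H, ‖x'‖ = 1 ∧ (ℂ ∙ x') = (ℂ ∙ x) ∧ delta (⇑e) x' = x' ⊗ₜ[ℂ] x' ] := by
  classical
  have cne : ∀ {c : ℂ}, ‖c‖ = 1 → c ≠ 0 := by
    intro c hc1 h0; rw [h0] at hc1; simp at hc1
  tfae_have 1 → 2
  | h1 => by
    have hxx : projL (ℂ ∙ x) x = x := by
      rw [projL_span_singleton hx]
      have h11 : ⟪x, x⟫_ℂ = 1 := by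
        rw [inner_self_eq_norm_sq_to_K, hx]; norm_num
      rw [h11, one_smul]
    have h2 := LinearMap.congr_fun h1 x
    simp only [LinearMap.comp_apply, hxx] at h2
    set z : ℂ := ∑ k, ⟪e k, x⟫_ℂ * (⟪x, e k⟫_ℂ * ⟪x, e k⟫_ℂ) with hzdef
    have htm : ∀ (a : ℂ) (u v : H), (a • u) ⊗ₜ[ℂ] (a • v) = (a * a) • (u ⊗ₜ[ℂ] v) :=
      fun a u v => TensorProduct.smul_tmul_smul a a u v
    have hrhs : TensorProduct.map (projL (ℂ ∙ x)) (projL (ℂ ∙ x)) (delta (⇑e) x)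
        = z • (x ⊗ₜ[ℂ] x) := by
      rw [delta_apply, map_sum]
      rw [Finset.sum_congr rfl (fun k _ => by
        rw [map_smul, TensorProduct.map_tmul, projL_span_singleton hx (e k), htm, smul_smul])]
      rw [← Finset.sum_smul]
    have hzx : delta (⇑e) x = z • (x ⊗ₜ[ℂ] x) := h2.trans hrhs
    obtain ⟨i, c, hc1, hxc⟩ := key e x hx z hzx
    refine ⟨(starRingEnd ℂ) c, by simpa using hc1, ?_⟩
    have hcc : (starRingEnd ℂ) c * c = 1 := by
      rw [mul_comm, Complex.mul_conj, Complex.normSq_eq_norm_sq, hc1]; norm_num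
    rw [hxc, map_smul, delta_onb, htm, smul_smul, ← mul_assoc, hcc, one_mul]
  tfae_have 2 → 3
  | ⟨z, hz1, hz⟩ => by
    obtain ⟨i, c, hc1, hxc⟩ := key e x hx z hz
    refine ⟨e i, e.orthonormal.1 i, ?_, delta_onb e i⟩
    rw [hxc]
    exact (Submodule.span_singleton_smul_eq (isUnit_iff_ne_zero.mpr (cne hc1)) (e i)).symm
  tfae_have 3 → 1
  | ⟨x', hx'1, hspan, hd⟩ => by
    obtain ⟨i, c, hc1, hxc⟩ := key e x' hx'1 1 (by rw [hd, one_smul])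
    have hsp : (ℂ ∙ x) = ℂ ∙ (e i) := by
      rw [← hspan, hxc,
        Submodule.span_singleton_smul_eq (isUnit_iff_ne_zero.mpr (cne hc1)) (e i)]
    have hcb := copyable_basis e i
    rwa [← hsp] at hcb
  tfae_finish
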